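/- Let Fix(Ψ) = {h ∈ C(K) : Ψ(h) = h} and let A be the norm-closed subalgebra of C(K) (with the supremum norm) generated by Fix(Ψ). Then for every f ∈ A the sequence {Ψ^n(f)}_{n≥1} converges uniformly on K. -/

import Mathlib

open MeasureTheory Filter Topology ComplexOrder

/-- `Φ` is a Markov operator on the bounded Borel measurable functions on `U`:
for each `x` there is a Borel probability measure `P x` representing `Φ` at `x`. -/
def IsMarkovOperator {U : Type*} [MeasurableSpace U]
    (Φ : (U → ℂ) → (U → ℂ)) : Prop :=
  ∀ x : U, ∃ P : Measure U, IsProbabilityMeasure P ∧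
    ∀ f : U → ℂ, Measurable f → (∃ C : ℝ, ∀ y, ‖f y‖ ≤ C) →
      Φ f x = ∫ y, f y ∂P

/-- `Φ` has the strong Feller property: it maps bounded Borel measurable
functions to continuous functions. -/
def HasStrongFeller {U : Type*} [MeasurableSpace U] [TopologicalSpace U]
    (Φ : (U → ℂ) → (U → ℂ)) : Prop :=
  ∀ f : U → ℂ, Measurable f → (∃ C : ℝ, ∀ y, ‖f y‖ ≤ C) → Continuous (Φ f)

/-- Boundary condition (A): for each boundary point `x` there is a barrier
`h ∈ C(K)` with `h x = 0`, `h < 0` off `x`, and `Φ (h_U) ≥ h_U` on `U`. -/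
def CondA {K : Type*} [TopologicalSpace K] (U : Set K)
    (Φ : (↥U → ℂ) → (↥U → ℂ)) : Prop :=
  ∀ x ∈ Uᶜ, ∃ h : C(K, ℂ), h x = 0 ∧ (∀ y : K, y ≠ x → h y < 0) ∧
    ∀ u : ↥U, h u.1 ≤ Φ (fun v : ↥U => h v.1) u

/-- Maximum principle (B): every real-valued `g ∈ C(K)` with `Φ (g_U) ≥ g_U`
on `U` attaining its global maximum inside `U` is constant. -/
def CondB {K : Type*} [TopologicalSpace K] (U : Set K)
    (Φ : (↥U → ℂ) → (↥U → ℂ)) : Prop :=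
  ∀ g : C(K, ℂ), (∀ x : K, (g x).im = 0) →
    (∀ u : ↥U, g u.1 ≤ Φ (fun v : ↥U => g v.1) u) →
    (∃ z ∈ U, ∀ x : K, g x ≤ g z) →
    ∀ x y : K, g x = g y

/-- The map `Ψ` : `Ψ f = Φ (f_U)` on `U` and `Ψ f = f` on `∂U = K \ U`. -/
noncomputable def psiFun {K : Type*} (U : Set K)
    (Φ : (↥U → ℂ) → (↥U → ℂ)) (f : K → ℂ) : K → ℂ :=
  open Classical in fun x => if hx : x ∈ U then Φ (fun v : ↥U => f v.1) ⟨x, hx⟩ else f x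

section Basic

variable {K : Type*} [MetricSpace K] [CompactSpace K] [MeasurableSpace K] [BorelSpace K]
  {U : Set K} (Φ : (↥U → ℂ) → (↥U → ℂ))

/-- measurable and bounded -/
def MB (f : K → ℂ) : Prop := Measurable f ∧ ∃ C : ℝ, ∀ y, ‖f y‖ ≤ C

lemma MB.of_continuous {f : K → ℂ} (hf : Continuous f) : MB f := by
  refine ⟨hf.measurable, ?_⟩
  obtain ⟨C, hC⟩ := (isCompact_univ.image (hf.norm)).bddAbove
  exact ⟨C, fun y => hC ⟨y, trivial, rfl⟩⟩

lemma MB.restrict {f : K → ℂ} (hf : MB f) :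
    Measurable (fun v : ↥U => f v.1) ∧ ∃ C : ℝ, ∀ y : ↥U, ‖f y.1‖ ≤ C := by
  obtain ⟨C, hC⟩ := hf.2
  exact ⟨hf.1.comp measurable_subtype_coe, C, fun y => hC y.1⟩

lemma integrable_of_MB {f : K → ℂ} (hf : MB f) (P : Measure ↥U) [IsFiniteMeasure P] :
    Integrable (fun v : ↥U => f v.1) P := by
  obtain ⟨C, hC⟩ := hf.2
  exact (integrable_const C).mono'
    ((hf.1.comp measurable_subtype_coe).aestronglyMeasurable)
    (Filter.Eventually.of_forall fun y => hC y.1)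

lemma psi_apply_mem (f : K → ℂ) {x : K} (hx : x ∈ U) :
    psiFun U Φ f x = Φ (fun v : ↥U => f v.1) ⟨x, hx⟩ := dif_pos hx

lemma psi_apply_compl (f : K → ℂ) {x : K} (hx : x ∉ U) :
    psiFun U Φ f x = f x := dif_neg hx

/-- representing measure at a point, valid for all MB functions -/
lemma exists_rep (hM : IsMarkovOperator Φ) (x : ↥U) :
    ∃ P : Measure ↥U, IsProbabilityMeasure P ∧
      ∀ g : K → ℂ, MB g → psiFun U Φ g x.1 = ∫ y, g y.1 ∂P := by
  obtain ⟨P, hP, hrep⟩ := hM x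
  refine ⟨P, hP, fun g hg => ?_⟩
  rw [psi_apply_mem Φ g x.2]
  have := hrep (fun v : ↥U => g v.1) hg.restrict.1 hg.restrict.2
  simpa using this

end Basic

section Point

set_option linter.unusedSectionVars false

variable {K : Type*} [MetricSpace K] [CompactSpace K] [MeasurableSpace K] [BorelSpace K]
  {U : Set K} {Φ : (↥U → ℂ) → (↥U → ℂ)} (hM : IsMarkovOperator Φ)

lemma cint_mono {α : Type*} [MeasurableSpace α] {μ : Measure α} [IsProbabilityMeasure μ]
    {f g : α → ℂ} (hf : Integrable f μ) (hg : Integrable g μ) (h : ∀ y, f y ≤ g y) :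
    ∫ y, f y ∂μ ≤ ∫ y, g y ∂μ := by
  rw [Complex.le_def]
  have hre : (∫ y, f y ∂μ).re = ∫ y, (f y).re ∂μ := (integral_re hf).symm
  have hgre : (∫ y, g y ∂μ).re = ∫ y, (g y).re ∂μ := (integral_re hg).symm
  have him : (∫ y, f y ∂μ).im = ∫ y, (f y).im ∂μ := (integral_im hf).symm
  have hgim : (∫ y, g y ∂μ).im = ∫ y, (g y).im ∂μ := (integral_im hg).symm
  constructor
  · rw [hre, hgre]
    exact integral_mono hf.re hg.re (fun y => (Complex.le_def.1 (h y)).1)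
  · rw [him, hgim]
    exact congrArg _ (funext fun y => (Complex.le_def.1 (h y)).2)

include hM

lemma psi_norm_le {f : K → ℂ} (hf : MB f) {C : ℝ} (hC : ∀ y, ‖f y‖ ≤ C) (x : K) :
    ‖psiFun U Φ f x‖ ≤ C := by
  by_cases hx : x ∈ U
  · obtain ⟨P, hP, hrep⟩ := exists_rep Φ hM ⟨x, hx⟩
    rw [show x = (⟨x, hx⟩ : ↥U).1 from rfl, hrep f hf]
    calc ‖∫ y, f y.1 ∂P‖ ≤ C * (P Set.univ).toReal :=
          norm_integral_le_of_norm_le_const (Filter.Eventually.of_forall fun y => hC y.1)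
      _ = C := by simp
  · rw [psi_apply_compl Φ f hx]; exact hC x

lemma psi_mono {f g : K → ℂ} (hf : MB f) (hg : MB g) (h : ∀ y, f y ≤ g y) (x : K) :
    psiFun U Φ f x ≤ psiFun U Φ g x := by
  by_cases hx : x ∈ U
  · obtain ⟨P, hP, hrep⟩ := exists_rep Φ hM ⟨x, hx⟩
    rw [show x = (⟨x, hx⟩ : ↥U).1 from rfl, hrep f hf, hrep g hg]
    exact cint_mono (integrable_of_MB hf P) (integrable_of_MB hg P) (fun y => h y.1)
  · rw [psi_apply_compl Φ f hx, psi_apply_compl Φ g hx]; exact h x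

lemma psi_real {f : K → ℂ} (hf : MB f) (hre : ∀ y, (f y).im = 0) (x : K) :
    (psiFun U Φ f x).im = 0 := by
  by_cases hx : x ∈ U
  · obtain ⟨P, hP, hrep⟩ := exists_rep Φ hM ⟨x, hx⟩
    rw [show x = (⟨x, hx⟩ : ↥U).1 from rfl, hrep f hf]
    have : (∫ y : ↥U, f y.1 ∂P).im = ∫ y : ↥U, (f y.1).im ∂P :=
      (integral_im (integrable_of_MB hf P)).symm
    rw [this, show (fun y : ↥U => (f y.1).im) = fun _ => (0:ℝ) from funext fun y => hre y.1]
    simp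
  · rw [psi_apply_compl Φ f hx]; exact hre x

lemma psi_add {f g : K → ℂ} (hf : MB f) (hg : MB g) :
    psiFun U Φ (fun y => f y + g y) = fun x => psiFun U Φ f x + psiFun U Φ g x := by
  funext x
  by_cases hx : x ∈ U
  · obtain ⟨P, hP, hrep⟩ := exists_rep Φ hM ⟨x, hx⟩
    have hfg : MB (fun y => f y + g y) := by
      obtain ⟨Cf, hCf⟩ := hf.2; obtain ⟨Cg, hCg⟩ := hg.2
      exact ⟨hf.1.add hg.1, Cf + Cg, fun y =>
        (norm_add_le _ _).trans (add_le_add (hCf y) (hCg y))⟩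
    rw [show x = (⟨x, hx⟩ : ↥U).1 from rfl, hrep _ hfg, hrep f hf, hrep g hg]
    exact integral_add (integrable_of_MB hf P) (integrable_of_MB hg P)
  · rw [psi_apply_compl Φ _ hx, psi_apply_compl Φ f hx, psi_apply_compl Φ g hx]

lemma psi_smul {f : K → ℂ} (hf : MB f) (c : ℂ) :
    psiFun U Φ (fun y => c * f y) = fun x => c * psiFun U Φ f x := by
  funext x
  by_cases hx : x ∈ U
  · obtain ⟨P, hP, hrep⟩ := exists_rep Φ hM ⟨x, hx⟩
    have hcf : MB (fun y => c * f y) := by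
      obtain ⟨Cf, hCf⟩ := hf.2
      exact ⟨hf.1.const_mul c, ‖c‖ * Cf, fun y => by
        rw [norm_mul]; exact mul_le_mul_of_nonneg_left (hCf y) (norm_nonneg c)⟩
    rw [show x = (⟨x, hx⟩ : ↥U).1 from rfl, hrep _ hcf, hrep f hf]
    exact integral_const_mul c _
  · rw [psi_apply_compl Φ _ hx, psi_apply_compl Φ f hx]

lemma psi_const (c : ℂ) : psiFun U Φ (fun _ => c) = fun _ => c := by
  funext x
  by_cases hx : x ∈ U
  · obtain ⟨P, hP, hrep⟩ := exists_rep Φ hM ⟨x, hx⟩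
    have : MB (fun _ : K => c) := ⟨measurable_const, ‖c‖, fun _ => le_refl _⟩
    rw [show x = (⟨x, hx⟩ : ↥U).1 from rfl, hrep _ this]
    simp
  · exact psi_apply_compl Φ _ hx

lemma psi_conj {f : K → ℂ} (hf : MB f) :
    psiFun U Φ (fun y => (starRingEnd ℂ) (f y)) = fun x => (starRingEnd ℂ) (psiFun U Φ f x) := by
  funext x
  by_cases hx : x ∈ U
  · obtain ⟨P, hP, hrep⟩ := exists_rep Φ hM ⟨x, hx⟩
    have hcf : MB (fun y => (starRingEnd ℂ) (f y)) := by
      obtain ⟨Cf, hCf⟩ := hf.2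
      exact ⟨(Complex.continuous_conj.measurable).comp hf.1, Cf, fun y => by
        rw [RCLike.norm_conj]; exact hCf y⟩
    rw [show x = (⟨x, hx⟩ : ↥U).1 from rfl, hrep _ hcf, hrep f hf]
    exact integral_conj
  · rw [psi_apply_compl Φ _ hx, psi_apply_compl Φ f hx]

end Point

section Cont

set_option linter.unusedSectionVars false

variable {K : Type*} [MetricSpace K] [CompactSpace K] [MeasurableSpace K] [BorelSpace K]
  {U : Set K} {Φ : (↥U → ℂ) → (↥U → ℂ)} (hM : IsMarkovOperator Φ)
  (hSF : HasStrongFeller Φ) (hUo : IsOpen U) (hA : CondA U Φ)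

lemma psi_MB (hM : IsMarkovOperator Φ) (hSF : HasStrongFeller Φ) (hUo : IsOpen U)
    {f : K → ℂ} (hf : MB f) : MB (psiFun U Φ f) := by
  classical
  have hFc : Continuous (Φ (fun v : ↥U => f v.1)) := hSF _ hf.restrict.1 hf.restrict.2
  constructor
  · exact Measurable.dite hFc.measurable
      (hf.1.comp measurable_subtype_coe) hUo.measurableSet
  · obtain ⟨C, hC⟩ := hf.2
    exact ⟨C, psi_norm_le hM hf hC⟩

lemma psi_contOn (hSF : HasStrongFeller Φ) {f : K → ℂ} (hf : MB f) :
    ContinuousOn (psiFun U Φ f) U := by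
  have hFc : Continuous (Φ (fun v : ↥U => f v.1)) := hSF _ hf.restrict.1 hf.restrict.2
  rw [continuousOn_iff_continuous_restrict]
  have : U.domRestrict (psiFun U Φ f) = Φ (fun v : ↥U => f v.1) :=
    funext fun y => by rw [Set.restrict_apply, psi_apply_mem Φ f y.2]
  rw [this]; exact hFc

lemma barrier (hA : CondA U Φ) {x₀ : K} (hx₀ : x₀ ∈ Uᶜ) :
    ∃ h : C(K,ℂ), h x₀ = 0 ∧ (∀ y, (h y).im = 0) ∧ (∀ y, (h y).re ≤ 0) ∧
      (∀ y, y ≠ x₀ → (h y).re < 0) ∧ (∀ y, h y ≤ psiFun U Φ ⇑h y) := by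
  obtain ⟨h, h0, hneg, hpsi⟩ := hA x₀ hx₀
  have him : ∀ y, (h y).im = 0 := by
    intro y
    by_cases hy : y = x₀
    · rw [hy, h0]; rfl
    · exact (Complex.lt_def.1 (hneg y hy)).2
  have hre : ∀ y, (h y).re ≤ 0 := by
    intro y
    by_cases hy : y = x₀
    · rw [hy, h0]; simp
    · exact le_of_lt (Complex.lt_def.1 (hneg y hy)).1
  refine ⟨h, h0, him, hre, fun y hy => (Complex.lt_def.1 (hneg y hy)).1, fun y => ?_⟩
  by_cases hyU : y ∈ U
  · rw [psi_apply_mem Φ _ hyU]; exact hpsi ⟨y, hyU⟩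
  · rw [psi_apply_compl Φ _ hyU]

/-- key barrier construction: a continuous superharmonic majorant close to `g x₀` at `x₀`. -/
lemma dominating (hM : IsMarkovOperator Φ) (hA : CondA U Φ) {x₀ : K} (hx₀ : x₀ ∈ Uᶜ)
    (g : C(K,ℂ)) (hgre : ∀ y, (g y).im = 0) {ε : ℝ} (hε : 0 < ε) :
    ∃ q : C(K,ℂ), (∀ y, (q y).im = 0) ∧ q x₀ = g x₀ + ε ∧ (∀ y, g y ≤ q y) ∧
      (∀ y, psiFun U Φ ⇑q y ≤ q y) := by
  obtain ⟨h, h0, him, hre, hneg, hpsih⟩ := barrier hA hx₀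
  -- continuity of g at x₀
  obtain ⟨δ, hδpos, hδ⟩ := Metric.continuousAt_iff.1 (g.continuous.continuousAt (x := x₀)) ε hε
  -- find M ≥ 0 with  g ≤ g x₀ + ε - M h  on all of K
  obtain ⟨M, hM0, hMg⟩ :
      ∃ M : ℝ, 0 ≤ M ∧ ∀ y, ¬ dist y x₀ < δ → (g y).re ≤ (g x₀).re + ε + M * (-(h y).re) := by
    by_cases hne : {y : K | δ ≤ dist y x₀}.Nonempty
    · have hKc : IsClosed {y : K | δ ≤ dist y x₀} :=
        isClosed_le continuous_const (continuous_id.dist continuous_const)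
      obtain ⟨z, hz, hzmax⟩ := hKc.isCompact.exists_isMaxOn hne
        ((Complex.continuous_re.comp h.continuous).continuousOn)
      set c : ℝ := -(h z).re with hc
      have hzne : z ≠ x₀ := by
        intro hzx; rw [hzx] at hz
        simp only [Set.mem_setOf_eq, dist_self] at hz; linarith
      have hcpos : 0 < c := by simp only [hc, neg_pos]; exact hneg z hzne
      refine ⟨(2 * ‖g‖ + 1) / c, by positivity, fun y hy => ?_⟩
      have hyKc : y ∈ {y : K | δ ≤ dist y x₀} := not_lt.1 hy
      have h1 : (h y).re ≤ (h z).re := hzmax hyKc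
      have h2 : c ≤ -(h y).re := by simp only [hc]; linarith
      have h3 : (2 * ‖g‖ + 1) ≤ (2 * ‖g‖ + 1) / c * (-(h y).re) := by
        rw [div_mul_eq_mul_div, le_div_iff₀ hcpos]
        have : 0 ≤ 2 * ‖g‖ + 1 := by positivity
        nlinarith
      have h4 : (g y).re ≤ ‖g‖ := by
        calc (g y).re ≤ |(g y).re| := le_abs_self _
          _ ≤ ‖g y‖ := Complex.abs_re_le_norm _
          _ ≤ ‖g‖ := by exact g.norm_coe_le_norm y
      have h5 : -‖g‖ ≤ (g x₀).re := by
        have : |(g x₀).re| ≤ ‖g‖ := le_trans (Complex.abs_re_le_norm _)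
          (by exact g.norm_coe_le_norm x₀)
        linarith [neg_abs_le ((g x₀).re)]
      linarith
    · refine ⟨0, le_refl 0, fun y hy => absurd ?_ hy⟩
      by_contra hlt
      exact hne ⟨y, not_lt.1 hlt⟩
  set q : C(K,ℂ) := ContinuousMap.const K (g x₀ + (ε:ℂ)) - (M:ℂ) • h with hq
  have hqy : ∀ y, q y = g x₀ + (ε:ℂ) - (M:ℂ) * h y := fun y => rfl
  have hqim : ∀ y, (q y).im = 0 := by
    intro y
    simp [hqy, Complex.sub_im, Complex.add_im, Complex.mul_im, hgre x₀, him y,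
      Complex.ofReal_re, Complex.ofReal_im]
  have hqre : ∀ y, (q y).re = (g x₀).re + ε + M * (-(h y).re) := by
    intro y
    simp [hqy, Complex.sub_re, Complex.add_re, Complex.mul_re, him y,
      Complex.ofReal_re, Complex.ofReal_im]
    ring
  refine ⟨q, hqim, by rw [hqy, h0]; ring, fun y => ?_, fun y => ?_⟩
  · rw [Complex.le_def]
    refine ⟨?_, by rw [hqim y, hgre y]⟩
    rw [hqre y]
    by_cases hy : dist y x₀ < δ
    · have := hδ hy
      rw [Complex.dist_eq] at this
      have h1 : (g y).re - (g x₀).re ≤ ‖g y - g x₀‖ := by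
        have := Complex.abs_re_le_norm (g y - g x₀)
        simp only [Complex.sub_re] at this
        calc (g y).re - (g x₀).re ≤ |(g y).re - (g x₀).re| := le_abs_self _
          _ ≤ _ := this
      have h2 : 0 ≤ M * (-(h y).re) := mul_nonneg hM0 (by linarith [hre y])
      linarith
    · exact hMg y hy
  · -- Ψ q ≤ q
    have hhMB : MB ⇑h := MB.of_continuous h.continuous
    have hsm : MB (fun y => (-(M:ℂ)) * ⇑h y) := by
      obtain ⟨C, hC⟩ := hhMB.2
      exact ⟨hhMB.1.const_mul _, ‖(-(M:ℂ))‖ * C, fun y => by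
        rw [norm_mul]; exact mul_le_mul_of_nonneg_left (hC y) (norm_nonneg _)⟩
    have e0 : ⇑q = fun y => (fun _ : K => g x₀ + (ε:ℂ)) y + (fun y => (-(M:ℂ)) * ⇑h y) y := by
      funext y; rw [hqy]; ring
    have e1 : psiFun U Φ ⇑q
        = fun y => (g x₀ + (ε:ℂ)) + (-(M:ℂ)) * psiFun U Φ ⇑h y := by
      rw [e0, psi_add hM ⟨measurable_const, ‖g x₀ + (ε:ℂ)‖, fun _ => le_refl _⟩ hsm,
        psi_const hM, psi_smul hM hhMB]
    rw [e1, hqy]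
    have : (-(M:ℂ)) * psiFun U Φ (⇑h) y ≤ (-(M:ℂ)) * h y := by
      apply mul_le_mul_of_nonpos_left (hpsih y)
      rw [Complex.le_def]; constructor
      · simp; linarith
      · simp
    calc (g x₀ + (ε:ℂ)) + (-(M:ℂ)) * psiFun U Φ (⇑h) y
        ≤ (g x₀ + (ε:ℂ)) + (-(M:ℂ)) * h y := by exact add_le_add_right this _
      _ = g x₀ + (ε:ℂ) - (M:ℂ) * h y := by ring

end Cont

section PsiCont

set_option linter.unusedSectionVars false

variable {K : Type*} [MetricSpace K] [CompactSpace K] [MeasurableSpace K] [BorelSpace K]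
  {U : Set K} {Φ : (↥U → ℂ) → (↥U → ℂ)}

lemma psi_neg (hM : IsMarkovOperator Φ) {f : K → ℂ} (hf : MB f) :
    psiFun U Φ (fun y => -(f y)) = fun x => -(psiFun U Φ f x) := by
  have := psi_smul hM hf (-1)
  simpa using this

/-- continuity of `Ψ g` at boundary points, for real `g`. -/
lemma psi_contAt_bd (hM : IsMarkovOperator Φ) (hA : CondA U Φ)
    (g : C(K,ℂ)) (hgre : ∀ y, (g y).im = 0) {x₀ : K} (hx₀ : x₀ ∈ Uᶜ) :
    ContinuousAt (psiFun U Φ ⇑g) x₀ := by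
  have hgMB : MB ⇑g := MB.of_continuous g.continuous
  have hnegre : ∀ y, ((-g) y).im = 0 := by intro y; simp [hgre y]
  rw [Metric.continuousAt_iff]
  intro ε hε
  have hε4 : 0 < ε/4 := by linarith
  obtain ⟨q, hqim, hq0, hgq, hpsiq⟩ := dominating hM hA hx₀ g hgre hε4
  obtain ⟨q', hq'im, hq'0, hgq', hpsiq'⟩ := dominating hM hA hx₀ (-g) hnegre hε4
  -- Ψg ≤ q and -Ψg ≤ q' everywhere
  have hqMB : MB ⇑q := MB.of_continuous q.continuous
  have hq'MB : MB ⇑q' := MB.of_continuous q'.continuous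
  have hup : ∀ y, (psiFun U Φ ⇑g y).re ≤ (q y).re := fun y =>
    (Complex.le_def.1 (le_trans (psi_mono hM hgMB hqMB hgq y) (hpsiq y))).1
  have hdo : ∀ y, -(q' y).re ≤ (psiFun U Φ ⇑g y).re := by
    intro y
    have h1 : psiFun U Φ ⇑(-g) y ≤ q' y :=
      le_trans (psi_mono hM (MB.of_continuous (-g).continuous) hq'MB hgq' y) (hpsiq' y)
    have h2 : psiFun U Φ ⇑(-g) y = -(psiFun U Φ ⇑g y) := by
      have : ⇑(-g) = fun y => -(⇑g y) := by funext y; simp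
      rw [this, psi_neg hM hgMB]
    rw [h2] at h1
    have := (Complex.le_def.1 h1).1
    simp only [Complex.neg_re] at this ⊢
    linarith
  have him : ∀ y, (psiFun U Φ ⇑g y).im = 0 := psi_real hM hgMB hgre
  -- continuity of q, q' at x₀
  obtain ⟨δ₁, hδ₁, hq1⟩ := Metric.continuousAt_iff.1 (q.continuous.continuousAt (x := x₀)) (ε/4) hε4
  obtain ⟨δ₂, hδ₂, hq2⟩ := Metric.continuousAt_iff.1 (q'.continuous.continuousAt (x := x₀)) (ε/4) hε4
  refine ⟨min δ₁ δ₂, lt_min hδ₁ hδ₂, fun y hy => ?_⟩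
  have hy1 := hq1 (lt_of_lt_of_le hy (min_le_left _ _))
  have hy2 := hq2 (lt_of_lt_of_le hy (min_le_right _ _))
  rw [Complex.dist_eq] at hy1 hy2
  have e1 : (q y).re - (q x₀).re ≤ ‖q y - q x₀‖ := by
    have h := Complex.abs_re_le_norm (q y - q x₀)
    simp only [Complex.sub_re] at h
    exact le_trans (le_abs_self _) h
  have e2 : (q' y).re - (q' x₀).re ≤ ‖q' y - q' x₀‖ := by
    have h := Complex.abs_re_le_norm (q' y - q' x₀)
    simp only [Complex.sub_re] at h
    exact le_trans (le_abs_self _) h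
  have hq0re : (q x₀).re = (g x₀).re + ε/4 := by
    rw [hq0]; simp
  have hq'0re : (q' x₀).re = -(g x₀).re + ε/4 := by
    rw [hq'0]; simp
  have hx0 : psiFun U Φ ⇑g x₀ = g x₀ := psi_apply_compl Φ _ hx₀
  rw [Complex.dist_eq, hx0]
  have hrebound : |(psiFun U Φ ⇑g y).re - (g x₀).re| < ε := by
    rw [abs_lt]
    constructor
    · have := hdo y; linarith
    · have := hup y; linarith
  calc ‖psiFun U Φ ⇑g y - g x₀‖
      ≤ |(psiFun U Φ ⇑g y - g x₀).re| + |(psiFun U Φ ⇑g y - g x₀).im| :=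
        Complex.norm_le_abs_re_add_abs_im _
    _ < ε := by
        simp only [Complex.sub_re, Complex.sub_im, him y, hgre x₀, sub_zero, abs_zero,
          add_zero]
        exact hrebound

/-- `Ψ` maps `C(K)` into `C(K)`. -/
lemma psi_cont (hM : IsMarkovOperator Φ) (hSF : HasStrongFeller Φ) (hUo : IsOpen U)
    (hA : CondA U Φ) (g : C(K,ℂ)) : Continuous (psiFun U Φ ⇑g) := by
  -- split into real and imaginary parts
  have hkey : ∀ r : C(K,ℂ), (∀ y, (r y).im = 0) → Continuous (psiFun U Φ ⇑r) := by
    intro r hrre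
    rw [continuous_iff_continuousAt]
    intro x
    by_cases hx : x ∈ U
    · exact (psi_contOn hSF (MB.of_continuous r.continuous)).continuousAt (hUo.mem_nhds hx)
    · exact psi_contAt_bd hM hA r hrre hx
  set gre : C(K,ℂ) := ⟨fun y => ((g y).re : ℂ),
    Complex.continuous_ofReal.comp (Complex.continuous_re.comp g.continuous)⟩ with hgre
  set gim : C(K,ℂ) := ⟨fun y => ((g y).im : ℂ),
    Complex.continuous_ofReal.comp (Complex.continuous_im.comp g.continuous)⟩ with hgim
  have hgreMB : MB ⇑gre := MB.of_continuous gre.continuous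
  have hgimMB : MB ⇑gim := MB.of_continuous gim.continuous
  have hIgim : MB (fun y => Complex.I * ⇑gim y) := by
    obtain ⟨C, hC⟩ := hgimMB.2
    exact ⟨hgimMB.1.const_mul _, ‖Complex.I‖ * C, fun y => by
      rw [norm_mul]; exact mul_le_mul_of_nonneg_left (hC y) (norm_nonneg _)⟩
  have hsplit : ⇑g = fun y => ⇑gre y + Complex.I * ⇑gim y := by
    funext y
    simp only [hgre, hgim, ContinuousMap.coe_mk]
    rw [mul_comm]
    exact (Complex.re_add_im (g y)).symm
  have e1 : psiFun U Φ ⇑g = fun x => psiFun U Φ ⇑gre x + Complex.I * psiFun U Φ ⇑gim x := by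
    rw [hsplit, psi_add hM hgreMB hIgim, psi_smul hM hgimMB]
  rw [e1]
  have c1 : Continuous (psiFun U Φ ⇑gre) := hkey gre (fun y => by simp [hgre])
  have c2 : Continuous (psiFun U Φ ⇑gim) := hkey gim (fun y => by simp [hgim])
  exact c1.add (continuous_const.mul c2)

end PsiCont

section Dini

/-- Dini's theorem. -/
lemma dini_mono {X : Type*} [TopologicalSpace X] [CompactSpace X] {g : ℕ → X → ℝ} {p : X → ℝ}
    (hgc : ∀ n, Continuous (g n)) (hpc : Continuous p)
    (hmono : ∀ n x, g n x ≤ g (n+1) x)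
    (hlim : ∀ x, Filter.Tendsto (fun n => g n x) Filter.atTop (nhds (p x))) :
    TendstoUniformly g p Filter.atTop := by
  have hmono' : ∀ x, Monotone (fun n => g n x) := fun x =>
    monotone_nat_of_le_succ (fun n => hmono n x)
  have hle : ∀ n x, g n x ≤ p x := fun n x => Monotone.ge_of_tendsto (hmono' x) (hlim x) n
  rw [Metric.tendstoUniformly_iff]
  intro ε hε
  set E : ℕ → Set X := fun n => {x | p x - g n x < ε} with hE
  have hEopen : ∀ n, IsOpen (E n) :=
    fun n => isOpen_lt (hpc.sub (hgc n)) continuous_const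
  have hcover : Set.univ ⊆ ⋃ n, E n := by
    intro x _
    obtain ⟨n, hn⟩ := (Metric.tendsto_atTop.1 (hlim x) ε hε)
    have := hn n (le_refl n)
    rw [Real.dist_eq, abs_sub_lt_iff] at this
    exact Set.mem_iUnion.2 ⟨n, by simpa [hE] using this.2⟩
  obtain ⟨t, ht⟩ := isCompact_univ.elim_finite_subcover E hEopen hcover
  rw [Filter.eventually_atTop]
  refine ⟨t.sup id, fun n hn x => ?_⟩
  obtain ⟨m, hmt, hmx⟩ := Set.mem_iUnion₂.1 (ht (Set.mem_univ x))
  have hmn : m ≤ n := le_trans (Finset.le_sup (f := id) hmt) hn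
  have h1 : g m x ≤ g n x := hmono' x hmn
  have hmx' : p x - g m x < ε := by simpa [hE] using hmx
  have h2 : p x - g n x < ε := by linarith
  rw [Real.dist_eq, abs_sub_lt_iff]
  exact ⟨h2, lt_of_le_of_lt (by linarith [hle n x]) hε⟩

end Dini

section Core

set_option linter.unusedSectionVars false

variable {K : Type*} [MetricSpace K] [CompactSpace K] [MeasurableSpace K] [BorelSpace K]
  {U : Set K} {Φ : (↥U → ℂ) → (↥U → ℂ)}

lemma int_bdd_real {α : Type*} [MeasurableSpace α] {μ : Measure α} [IsFiniteMeasure μ]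
    {f : α → ℝ} (hf : Measurable f) {C : ℝ} (hC : ∀ y, |f y| ≤ C) : Integrable f μ :=
  (integrable_const C).mono' hf.aestronglyMeasurable
    (Filter.Eventually.of_forall fun y => by rw [Real.norm_eq_abs]; exact hC y)

/-- Jensen step : `Ψ (w^k) ≥ w^k` for a nonnegative real fixed point `w`. -/
lemma jensen_step (hM : IsMarkovOperator Φ)
    (w : C(K,ℂ)) (hwim : ∀ x, (w x).im = 0) (hwpos : ∀ x, 0 ≤ (w x).re)
    (hwfix : psiFun U Φ ⇑w = ⇑w) (k : ℕ) (x : K) :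
    (w^k : C(K,ℂ)) x ≤ psiFun U Φ ⇑(w^k) x := by
  by_cases hx : x ∈ U
  · obtain ⟨P, hP, hrep⟩ := exists_rep Φ hM ⟨x, hx⟩
    set wre : K → ℝ := fun y => (w y).re with hwre
    have hwr : ∀ y, w y = ((wre y : ℝ) : ℂ) := fun y =>
      Complex.ext (by simp [hwre]) (by simp [hwre, hwim y])
    have hgk : ∀ y, (w^k : C(K,ℂ)) y = (((wre y)^k : ℝ) : ℂ) := fun y => by
      rw [ContinuousMap.pow_apply, hwr y, ← Complex.ofReal_pow]
    have hwMB : MB ⇑w := MB.of_continuous w.continuous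
    have hgMB : MB ⇑(w^k) := MB.of_continuous (w^k).continuous
    obtain ⟨Cw, hCw⟩ := hwMB.2
    have hwreM : Measurable fun y : ↥U => wre y.1 :=
      (Complex.measurable_re.comp hwMB.1).comp measurable_subtype_coe
    have hwreB : ∀ y : ↥U, |wre y.1| ≤ Cw := fun y => by
      calc |wre y.1| ≤ ‖w y.1‖ := Complex.abs_re_le_norm _
        _ ≤ Cw := by exact hCw y.1
    have hint1 : Integrable (fun y : ↥U => wre y.1) P := int_bdd_real hwreM hwreB
    have hint2 : Integrable (fun y : ↥U => (wre y.1)^k) P := by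
      refine int_bdd_real (hwreM.pow_const k) (C := Cw^k) fun y => ?_
      rw [abs_pow]
      exact pow_le_pow_left₀ (abs_nonneg _) (hwreB y) k
    -- Jensen's inequality
    have hjen : (∫ y : ↥U, wre y.1 ∂P)^k ≤ ∫ y : ↥U, (wre y.1)^k ∂P := by
      have := (convexOn_pow (𝕜 := ℝ) k).map_integral_le (μ := P)
        (f := fun y : ↥U => wre y.1)
        ((continuous_pow k).continuousOn) isClosed_Ici
        (Filter.Eventually.of_forall fun y => hwpos y.1) hint1 hint2
      simpa using this
    -- w x = ∫ w dP
    have hwfixx : (w x : ℂ) = ∫ y : ↥U, w y.1 ∂P := by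
      conv_lhs => rw [← congrFun hwfix x]
      rw [show x = ((⟨x, hx⟩ : ↥U) : K) from rfl]
      exact hrep ⇑w hwMB
    have hwint : ∫ y : ↥U, w y.1 ∂P = ((∫ y : ↥U, wre y.1 ∂P : ℝ) : ℂ) := by
      rw [show (fun y : ↥U => w y.1) = fun y : ↥U => ((wre y.1 : ℝ) : ℂ) from
        funext fun y => hwr y.1]
      exact integral_ofReal
    have hwx : wre x = ∫ y : ↥U, wre y.1 ∂P := by
      have := hwfixx.trans hwint
      have := congrArg Complex.re this
      simpa [hwre] using this
    -- now compute Ψ (w^k) x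
    have hpsix : psiFun U Φ ⇑(w^k) x = ((∫ y : ↥U, (wre y.1)^k ∂P : ℝ) : ℂ) := by
      rw [show x = ((⟨x, hx⟩ : ↥U) : K) from rfl, hrep ⇑(w^k) hgMB]
      rw [show (fun y : ↥U => (w^k : C(K,ℂ)) y.1) = fun y : ↥U => (((wre y.1)^k : ℝ) : ℂ) from
        funext fun y => hgk y.1]
      exact integral_ofReal
    rw [hpsix, hgk x, Complex.le_def]
    constructor
    · simp only [Complex.ofReal_re]
      rw [hwx] at *
      exact hjen
    · simp [← Complex.ofReal_pow]
  · rw [psi_apply_compl Φ _ hx]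

/-- The core convergence result : for a nonnegative real fixed point `w` of `Ψ` and `k : ℕ`,
the iterates `Ψⁿ (w^k)` converge uniformly. -/
lemma good_pow (hM : IsMarkovOperator Φ) (hSF : HasStrongFeller Φ) (hUo : IsOpen U)
    (hA : CondA U Φ)
    (w : C(K,ℂ)) (hwim : ∀ x, (w x).im = 0) (hwpos : ∀ x, 0 ≤ (w x).re)
    (hwfix : psiFun U Φ ⇑w = ⇑w) (k : ℕ) :
    ∃ p : K → ℂ, TendstoUniformly (fun n x => (psiFun U Φ)^[n] ⇑(w^k) x) p Filter.atTop := by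
  set g : K → ℂ := ⇑(w^k) with hg
  have hgc : Continuous g := (w^k).continuous
  have hgim : ∀ y, (g y).im = 0 := by
    intro y
    have hwr : w y = (((w y).re : ℝ) : ℂ) := Complex.ext rfl (by simp [hwim y])
    rw [hg, ContinuousMap.coe_pow]
    simp only [Pi.pow_apply]
    rw [hwr]
    simp [← Complex.ofReal_pow]
  set gseq : ℕ → K → ℂ := fun n => (psiFun U Φ)^[n] g with hgseq
  have hseq_succ : ∀ n, gseq (n+1) = psiFun U Φ (gseq n) := fun n =>
    Function.iterate_succ_apply' _ n g
  have hMBn : ∀ n, MB (gseq n) := by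
    intro n; induction n with
    | zero => exact MB.of_continuous hgc
    | succ n ih => rw [hseq_succ n]; exact psi_MB hM hSF hUo ih
  obtain ⟨C, hC⟩ := (MB.of_continuous hgc).2
  have hCb : ∀ n y, ‖gseq n y‖ ≤ C := by
    intro n; induction n with
    | zero => exact hC
    | succ n ih => rw [hseq_succ n]; exact psi_norm_le hM (hMBn n) ih
  have hrealn : ∀ n y, (gseq n y).im = 0 := by
    intro n; induction n with
    | zero => exact hgim
    | succ n ih => rw [hseq_succ n]; exact psi_real hM (hMBn n) ih
  have hcontn : ∀ n, Continuous (gseq n) := by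
    intro n; induction n with
    | zero => exact hgc
    | succ n ih => rw [hseq_succ n]; exact psi_cont hM hSF hUo hA ⟨gseq n, ih⟩
  have hbdn : ∀ n, ∀ x ∉ U, gseq n x = g x := by
    intro n; induction n with
    | zero => exact fun x _ => rfl
    | succ n ih => intro x hx; rw [hseq_succ n, psi_apply_compl Φ _ hx]; exact ih x hx
  have hmono : ∀ n x, gseq n x ≤ gseq (n+1) x := by
    intro n; induction n with
    | zero =>
      intro x
      rw [show gseq 1 = psiFun U Φ (gseq 0) from hseq_succ 0]
      exact jensen_step hM w hwim hwpos hwfix k x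
    | succ n ih =>
      intro x
      rw [hseq_succ n, hseq_succ (n+1)]
      exact psi_mono hM (hMBn n) (hMBn (n+1)) ih x
  -- real parts
  set rseq : ℕ → K → ℝ := fun n x => (gseq n x).re with hrseq
  have hofr : ∀ n x, gseq n x = ((rseq n x : ℝ) : ℂ) := fun n x =>
    Complex.ext rfl (by simp [hrseq, hrealn n x])
  have hrmono : ∀ x, Monotone fun n => rseq n x := fun x =>
    monotone_nat_of_le_succ (fun n => (Complex.le_def.1 (hmono n x)).1)
  have hrbd : ∀ n x, |rseq n x| ≤ C := fun n x => by
    calc |rseq n x| ≤ ‖gseq n x‖ := Complex.abs_re_le_norm _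
      _ ≤ C := by exact hCb n x
  set p : K → ℝ := fun x => ⨆ n, rseq n x with hp
  have hplim : ∀ x, Filter.Tendsto (fun n => rseq n x) Filter.atTop (nhds (p x)) := by
    intro x
    exact tendsto_atTop_ciSup (hrmono x)
      ⟨C, fun r ⟨n, hn⟩ => hn ▸ le_trans (le_abs_self _) (hrbd n x)⟩
  set pc : K → ℂ := fun x => ((p x : ℝ) : ℂ) with hpc
  have hgtend : ∀ x, Filter.Tendsto (fun n => gseq n x) Filter.atTop (nhds (pc x)) := by
    intro x
    have h := (Complex.continuous_ofReal.tendsto (p x)).comp (hplim x)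
    have h2 : (fun n => gseq n x) = (Complex.ofReal ∘ fun n => rseq n x) :=
      funext fun n => hofr n x
    rw [h2]; exact h
  have hpcMB : MB pc := by
    constructor
    · exact measurable_of_tendsto_metrizable (fun n => (hMBn n).1)
        (tendsto_pi_nhds.2 hgtend)
    · refine ⟨C, fun y => ?_⟩
      have : Filter.Tendsto (fun n => ‖gseq n y‖) Filter.atTop (nhds ‖pc y‖) :=
        (continuous_norm.tendsto _).comp (hgtend y)
      exact le_of_tendsto this (Filter.Eventually.of_forall fun n => hCb n y)
  -- pc is a fixed point of Ψ
  have hfix : psiFun U Φ pc = pc := by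
    funext x
    by_cases hx : x ∈ U
    · obtain ⟨P, hP, hrep⟩ := exists_rep Φ hM ⟨x, hx⟩
      have h1 : Filter.Tendsto (fun n => ∫ y : ↥U, gseq n y.1 ∂P) Filter.atTop
          (nhds (∫ y : ↥U, pc y.1 ∂P)) := by
        apply tendsto_integral_of_dominated_convergence (fun _ => C)
        · exact fun n => ((hMBn n).restrict.1).aestronglyMeasurable
        · exact integrable_const C
        · exact fun n => Filter.Eventually.of_forall fun y => hCb n y.1
        · exact Filter.Eventually.of_forall fun y => hgtend y.1
      have h2 : ∀ n, ∫ y : ↥U, gseq n y.1 ∂P = gseq (n+1) x := by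
        intro n
        rw [hseq_succ n, show x = ((⟨x, hx⟩ : ↥U) : K) from rfl, hrep _ (hMBn n)]
      have h3 : Filter.Tendsto (fun n => gseq (n+1) x) Filter.atTop (nhds (pc x)) :=
        (hgtend x).comp (Filter.tendsto_add_atTop_nat 1)
      rw [show x = ((⟨x, hx⟩ : ↥U) : K) from rfl, hrep pc hpcMB]
      rw [show (fun n => ∫ y : ↥U, gseq n y.1 ∂P) = fun n => gseq (n+1) x from
        funext h2] at h1
      exact tendsto_nhds_unique h1 h3
    · exact psi_apply_compl Φ _ hx
  -- pc equals g on the boundary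
  have hpbd : ∀ x ∉ U, pc x = g x := by
    intro x hx
    have : ∀ n, gseq n x = g x := fun n => hbdn n x hx
    have h1 : Filter.Tendsto (fun _ : ℕ => g x) Filter.atTop (nhds (pc x)) := by
      rw [show (fun _ : ℕ => g x) = fun n => gseq n x from funext fun n => (this n).symm]
      exact hgtend x
    exact tendsto_nhds_unique h1 tendsto_const_nhds
  -- continuity of pc
  have hpccont : Continuous pc := by
    rw [continuous_iff_continuousAt]
    intro x
    by_cases hx : x ∈ U
    · have : ContinuousOn (psiFun U Φ pc) U := psi_contOn hSF hpcMB
      rw [show pc = psiFun U Φ pc from hfix.symm]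
      exact this.continuousAt (hUo.mem_nhds hx)
    · -- boundary point : use the dominating function
      rw [Metric.continuousAt_iff]
      intro ε hε
      have hε2 : 0 < ε/2 := by linarith
      obtain ⟨q, hqim, hq0, hgq, hpsiq⟩ := dominating hM hA hx (w^k) hgim hε2
      have hqMB : MB ⇑q := MB.of_continuous q.continuous
      -- gseq n ≤ q for all n
      have hle : ∀ n y, gseq n y ≤ q y := by
        intro n; induction n with
        | zero => exact hgq
        | succ n ih =>
          intro y
          rw [hseq_succ n]
          exact le_trans (psi_mono hM (hMBn n) hqMB ih y) (hpsiq y)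
      have hpleq : ∀ y, p y ≤ (q y).re := by
        intro y
        exact le_of_tendsto (hplim y)
          (Filter.Eventually.of_forall fun n => (Complex.le_def.1 (hle n y)).1)
      have hgle : ∀ y, (g y).re ≤ p y := by
        intro y
        refine Monotone.ge_of_tendsto (hrmono y) (hplim y) 0
      have hpx0 : p x = (g x).re := by
        have := congrArg Complex.re (hpbd x hx)
        simpa [hpc] using this
      obtain ⟨δ₁, hδ₁, hd1⟩ := Metric.continuousAt_iff.1 (q.continuous.continuousAt (x := x))
        (ε/2) hε2
      obtain ⟨δ₂, hδ₂, hd2⟩ := Metric.continuousAt_iff.1 (hgc.continuousAt (x := x)) ε hε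
      refine ⟨min δ₁ δ₂, lt_min hδ₁ hδ₂, fun y hy => ?_⟩
      have hy1 := hd1 (lt_of_lt_of_le hy (min_le_left _ _))
      have hy2 := hd2 (lt_of_lt_of_le hy (min_le_right _ _))
      rw [Complex.dist_eq] at hy1 hy2
      have e1 : (q y).re - (q x).re ≤ ‖q y - q x‖ := by
        have h := Complex.abs_re_le_norm (q y - q x)
        simp only [Complex.sub_re] at h
        exact le_trans (le_abs_self _) h
      have e2 : (g x).re - (g y).re ≤ ‖g y - g x‖ := by
        have h := Complex.abs_re_le_norm (g y - g x)
        simp only [Complex.sub_re] at h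
        calc (g x).re - (g y).re ≤ |(g y).re - (g x).re| := by
              rw [abs_sub_comm]; exact le_abs_self _
          _ ≤ _ := h
      have hq0re : (q x).re = (g x).re + ε/2 := by
        have := congrArg Complex.re hq0
        simpa [hg] using this
      have hub : p y < (g x).re + ε := by
        have := hpleq y
        linarith
      have hlb : (g x).re - ε < p y := by
        have := hgle y
        linarith
      have : dist (pc y) (pc x) = |p y - p x| := by
        rw [Complex.dist_eq, hpc]
        rw [← Complex.ofReal_sub, Complex.norm_real, Real.norm_eq_abs]
      rw [this, hpx0, abs_sub_lt_iff]
      constructor <;> linarith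
  -- Dini's theorem
  have hpr : Continuous p := by
    have : p = Complex.re ∘ pc := by
      funext x; simp [hpc]
    rw [this]; exact Complex.continuous_re.comp hpccont
  have hrcont : ∀ n, Continuous (rseq n) := fun n =>
    Complex.continuous_re.comp (hcontn n)
  have hdini : TendstoUniformly rseq p Filter.atTop :=
    dini_mono hrcont hpr (fun n x => (Complex.le_def.1 (hmono n x)).1) hplim
  refine ⟨pc, ?_⟩
  rw [Metric.tendstoUniformly_iff] at hdini ⊢
  intro ε hε
  filter_upwards [hdini ε hε] with n hn x
  have : dist (pc x) (gseq n x) = dist (p x) (rseq n x) := by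
    rw [hofr n x, hpc, Complex.dist_eq, ← Complex.ofReal_sub, Complex.norm_real, Real.norm_eq_abs,
      Real.dist_eq]
  show dist (pc x) (gseq n x) < ε
  rw [this]
  exact hn x
end Core

section Polar

open Finset in
/-- Polarization identity in a commutative ring. -/
lemma polar_identity {R : Type*} [CommRing R] {ι : Type*} [DecidableEq ι] (x : ι → R) :
    ∀ (s : Finset ι) (e : ℕ), e ≤ s.card →
      ∑ T ∈ s.powerset, (-1:R)^(s.card - T.card) * (∑ i ∈ T, x i)^e =
        if e = s.card then (s.card.factorial : R) * ∏ i ∈ s, x i else 0 := by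
  intro s
  induction s using Finset.induction_on with
  | empty =>
    intro e he
    have he0 : e = 0 := Nat.le_zero.1 he
    subst he0
    simp
  | @insert a s ha ih =>
    intro e he
    have hc : (insert a s).card = s.card + 1 := Finset.card_insert_of_notMem ha
    rw [Finset.sum_powerset_insert ha]
    have hT1 : ∀ T ∈ s.powerset,
        (-1:R)^((insert a s).card - T.card) * (∑ i ∈ T, x i)^e
          = -((-1:R)^(s.card - T.card) * (∑ i ∈ T, x i)^e) := by
      intro T hT
      have h1 : T.card ≤ s.card := Finset.card_le_card (Finset.mem_powerset.1 hT)
      rw [hc, Nat.succ_sub h1, pow_succ]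
      ring
    have hT2 : ∀ T ∈ s.powerset,
        (-1:R)^((insert a s).card - (insert a T).card) * (∑ i ∈ insert a T, x i)^e
          = (-1:R)^(s.card - T.card) * (x a + ∑ i ∈ T, x i)^e := by
      intro T hT
      have haT : a ∉ T := fun h => ha (Finset.mem_powerset.1 hT h)
      have hcard : (insert a s).card - (insert a T).card = s.card - T.card := by
        rw [Finset.card_insert_of_notMem haT, hc]
        omega
      rw [hcard, Finset.sum_insert haT]
    rw [Finset.sum_congr rfl hT1, Finset.sum_congr rfl hT2, ← Finset.sum_add_distrib]
    have key : ∀ T ∈ s.powerset,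
        -((-1:R)^(s.card - T.card) * (∑ i ∈ T, x i)^e)
          + (-1:R)^(s.card - T.card) * (x a + ∑ i ∈ T, x i)^e
        = ∑ k ∈ Finset.range e,
            (-1:R)^(s.card - T.card) *
              ((∑ i ∈ T, x i)^k * (x a)^(e-k) * (e.choose k : R)) := by
      intro T hT
      have hexp : (x a + ∑ i ∈ T, x i)^e
          = (∑ k ∈ Finset.range e, (∑ i ∈ T, x i)^k * (x a)^(e-k) * (e.choose k : R))
              + (∑ i ∈ T, x i)^e := by
        rw [add_comm (x a), add_pow, Finset.sum_range_succ]
        simp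
      rw [hexp, mul_add, Finset.mul_sum]
      ring
    rw [Finset.sum_congr rfl key, Finset.sum_comm]
    have inner : ∀ k ∈ Finset.range e,
        ∑ T ∈ s.powerset, (-1:R)^(s.card - T.card) *
            ((∑ i ∈ T, x i)^k * (x a)^(e-k) * (e.choose k : R))
        = (x a)^(e-k) * (e.choose k : R) *
            (if k = s.card then (s.card.factorial : R) * ∏ i ∈ s, x i else 0) := by
      intro k hk
      rw [Finset.mem_range] at hk
      rw [← ih k (by rw [hc] at he; omega), Finset.mul_sum]
      exact Finset.sum_congr rfl fun T hT => by ring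
    rw [Finset.sum_congr rfl inner]
    rcases Nat.lt_or_ge e (s.card + 1) with hlt | hge
    · rw [if_neg (by omega)]
      refine Finset.sum_eq_zero fun k hk => ?_
      rw [Finset.mem_range] at hk
      rw [if_neg (by omega), mul_zero]
    · have heq : e = s.card + 1 := by rw [hc] at he; omega
      subst heq
      rw [hc, if_pos rfl]
      have h1 : ∀ k ∈ Finset.range (s.card + 1), k ≠ s.card →
          (x a)^(s.card + 1 - k) * ((s.card + 1).choose k : R) *
            (if k = s.card then (s.card.factorial : R) * ∏ i ∈ s, x i else 0)
          = 0 := by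
        intro k hk hkne
        rw [if_neg hkne, mul_zero]
      rw [Finset.sum_eq_single s.card h1
        (by intro h; exact absurd (Finset.self_mem_range_succ _) h)]
      rw [if_pos rfl, Finset.prod_insert ha]
      have hch : ((s.card + 1).choose s.card : R) = ((s.card + 1 : ℕ) : R) := by
        congr 1
        simpa using Nat.choose_succ_self_right s.card
      rw [show s.card + 1 - s.card = 1 by omega, pow_one, hch, Nat.factorial_succ]
      push_cast
      ring
end Polar

section Assemble

set_option linter.unusedSectionVars false
set_option maxHeartbeats 1000000

variable {K : Type*} [MetricSpace K] [CompactSpace K] [MeasurableSpace K] [BorelSpace K]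
  {U : Set K} {Φ : (↥U → ℂ) → (↥U → ℂ)}

/-- convergence property -/
def GoodF (U : Set K) (Φ : (↥U → ℂ) → (↥U → ℂ)) (f : C(K,ℂ)) : Prop :=
  ∃ p : K → ℂ, TendstoUniformly (fun n x => (psiFun U Φ)^[n] ⇑f x) p Filter.atTop

lemma iter_MB (hM : IsMarkovOperator Φ) (hSF : HasStrongFeller Φ) (hUo : IsOpen U)
    {f : K → ℂ} (hf : MB f) : ∀ n, MB ((psiFun U Φ)^[n] f) := by
  intro n; induction n with
  | zero => exact hf
  | succ n ih => rw [Function.iterate_succ_apply']; exact psi_MB hM hSF hUo ih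

lemma iter_add (hM : IsMarkovOperator Φ) (hSF : HasStrongFeller Φ) (hUo : IsOpen U)
    {f g : K → ℂ} (hf : MB f) (hg : MB g) : ∀ n,
    (psiFun U Φ)^[n] (fun x => f x + g x)
      = fun x => (psiFun U Φ)^[n] f x + (psiFun U Φ)^[n] g x := by
  intro n; induction n with
  | zero => rfl
  | succ n ih =>
    rw [Function.iterate_succ_apply', Function.iterate_succ_apply',
      Function.iterate_succ_apply', ih,
      psi_add hM (iter_MB hM hSF hUo hf n) (iter_MB hM hSF hUo hg n)]

lemma iter_smul (hM : IsMarkovOperator Φ) (hSF : HasStrongFeller Φ) (hUo : IsOpen U)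
    {f : K → ℂ} (hf : MB f) (c : ℂ) : ∀ n,
    (psiFun U Φ)^[n] (fun x => c * f x) = fun x => c * (psiFun U Φ)^[n] f x := by
  intro n; induction n with
  | zero => rfl
  | succ n ih =>
    rw [Function.iterate_succ_apply', Function.iterate_succ_apply', ih,
      psi_smul hM (iter_MB hM hSF hUo hf n)]

lemma iter_dist (hM : IsMarkovOperator Φ) (hSF : HasStrongFeller Φ) (hUo : IsOpen U)
    {f g : K → ℂ} (hf : MB f) (hg : MB g) {C : ℝ} (h : ∀ y, ‖f y - g y‖ ≤ C) :
    ∀ n x, ‖(psiFun U Φ)^[n] f x - (psiFun U Φ)^[n] g x‖ ≤ C := by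
  have hng : MB (fun y => (-1 : ℂ) * g y) := by
    obtain ⟨Cg, hCg⟩ := hg.2
    exact ⟨hg.1.const_mul _, Cg, fun y => by simpa using hCg y⟩
  have hd : MB (fun y => f y + (-1 : ℂ) * g y) := by
    obtain ⟨Cf, hCf⟩ := hf.2; obtain ⟨Cg, hCg⟩ := hng.2
    exact ⟨hf.1.add hng.1, Cf + Cg, fun y =>
      (norm_add_le _ _).trans (add_le_add (hCf y) (hCg y))⟩
  have hdb : ∀ y, ‖f y + (-1:ℂ) * g y‖ ≤ C := by
    intro y; simpa [sub_eq_add_neg] using h y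
  have key : ∀ n x, ‖(psiFun U Φ)^[n] (fun y => f y + (-1:ℂ) * g y) x‖ ≤ C := by
    intro n; induction n with
    | zero => exact hdb
    | succ n ih =>
      rw [Function.iterate_succ_apply']
      exact psi_norm_le hM (iter_MB hM hSF hUo hd n) ih
  intro n x
  have h2 := key n x
  rw [iter_add hM hSF hUo hf hng n, iter_smul hM hSF hUo hg (-1) n] at h2
  simpa [sub_eq_add_neg] using h2

lemma good_add (hM : IsMarkovOperator Φ) (hSF : HasStrongFeller Φ) (hUo : IsOpen U)
    {f g : C(K,ℂ)} (hf : GoodF U Φ f) (hg : GoodF U Φ g) : GoodF U Φ (f + g) := by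
  obtain ⟨p, hp⟩ := hf; obtain ⟨q, hq⟩ := hg
  refine ⟨fun x => p x + q x, ?_⟩
  have hco : ⇑(f + g) = fun x => ⇑f x + ⇑g x := rfl
  have hiter : ∀ n, (psiFun U Φ)^[n] ⇑(f+g)
      = fun x => (psiFun U Φ)^[n] ⇑f x + (psiFun U Φ)^[n] ⇑g x := by
    intro n
    rw [hco, iter_add hM hSF hUo (MB.of_continuous f.continuous)
      (MB.of_continuous g.continuous) n]
  rw [Metric.tendstoUniformly_iff] at hp hq ⊢
  intro ε hε
  have hε2 : 0 < ε/2 := by linarith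
  filter_upwards [hp (ε/2) hε2, hq (ε/2) hε2] with n hn1 hn2 x
  rw [hiter n]
  calc dist (p x + q x) ((psiFun U Φ)^[n] ⇑f x + (psiFun U Φ)^[n] ⇑g x)
      ≤ dist (p x) ((psiFun U Φ)^[n] ⇑f x) + dist (q x) ((psiFun U Φ)^[n] ⇑g x) :=
        dist_add_add_le _ _ _ _
    _ < ε := by have := hn1 x; have := hn2 x; linarith

lemma good_smul (hM : IsMarkovOperator Φ) (hSF : HasStrongFeller Φ) (hUo : IsOpen U)
    {f : C(K,ℂ)} (c : ℂ) (hf : GoodF U Φ f) : GoodF U Φ (c • f) := by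
  obtain ⟨p, hp⟩ := hf
  refine ⟨fun x => c * p x, ?_⟩
  have hco : ⇑(c • f) = fun x => c * ⇑f x := by
    funext x; simp [ContinuousMap.smul_apply, smul_eq_mul]
  have hiter : ∀ n, (psiFun U Φ)^[n] ⇑(c • f)
      = fun x => c * (psiFun U Φ)^[n] ⇑f x := by
    intro n
    rw [hco, iter_smul hM hSF hUo (MB.of_continuous f.continuous) c n]
  rw [Metric.tendstoUniformly_iff] at hp ⊢
  intro ε hε
  have hεc : 0 < ε / (‖c‖ + 1) := by positivity
  filter_upwards [hp _ hεc] with n hn x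
  rw [hiter n]
  show dist (c * p x) (c * (psiFun U Φ)^[n] ⇑f x) < ε
  simp only [Complex.dist_eq] at hn ⊢
  have : c * p x - c * (psiFun U Φ)^[n] ⇑f x = c * (p x - (psiFun U Φ)^[n] ⇑f x) := by ring
  rw [this]
  rw [norm_mul]
  have h1 : ‖c‖ ≤ ‖c‖ := le_refl _
  have h2 := hn x
  have h3 : ‖p x - (psiFun U Φ)^[n] ⇑f x‖ < ε / (‖c‖ + 1) := h2
  have h4 : 0 ≤ ‖p x - (psiFun U Φ)^[n] ⇑f x‖ := norm_nonneg _
  calc ‖c‖ * ‖p x - (psiFun U Φ)^[n] ⇑f x‖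
      ≤ (‖c‖ + 1) * ‖p x - (psiFun U Φ)^[n] ⇑f x‖ := by
        apply mul_le_mul_of_nonneg_right _ h4
        linarith
    _ < (‖c‖ + 1) * (ε / (‖c‖ + 1)) := by
        apply mul_lt_mul_of_pos_left h3
        positivity
    _ = ε := by field_simp

lemma good_zero (hM : IsMarkovOperator Φ) : GoodF U Φ (0 : C(K,ℂ)) := by
  refine ⟨fun _ => 0, ?_⟩
  have h0 : ∀ n, (psiFun U Φ)^[n] ⇑(0 : C(K,ℂ)) = fun _ => (0:ℂ) := by
    intro n
    rw [show ⇑(0 : C(K,ℂ)) = fun _ : K => (0:ℂ) from rfl]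
    exact Function.iterate_fixed (psi_const hM 0) n
  rw [Metric.tendstoUniformly_iff]
  intro ε hε
  filter_upwards with n x
  rw [h0 n]
  simpa using hε

/-- GoodF is closed under uniform limits. -/
lemma good_closed (hM : IsMarkovOperator Φ) (hSF : HasStrongFeller Φ) (hUo : IsOpen U)
    {f : C(K,ℂ)} (g : ℕ → C(K,ℂ)) (hg : ∀ k, GoodF U Φ (g k))
    (hlim : Filter.Tendsto g Filter.atTop (nhds f)) : GoodF U Φ f := by
  choose p hp using hg
  have hMBf : MB ⇑f := MB.of_continuous f.continuous
  have hMBg : ∀ k, MB ⇑(g k) := fun k => MB.of_continuous (g k).continuous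
  have hdist : ∀ k n x, ‖(psiFun U Φ)^[n] ⇑(g k) x - (psiFun U Φ)^[n] ⇑f x‖ ≤ ‖g k - f‖ := by
    intro k
    apply iter_dist hM hSF hUo (hMBg k) hMBf
    intro y
    calc ‖g k y - f y‖ = ‖(g k - f) y‖ := by simp
      _ ≤ ‖g k - f‖ := ContinuousMap.norm_coe_le_norm _ y
  have hnorm : Filter.Tendsto (fun k => ‖g k - f‖) Filter.atTop (nhds 0) := by
    have h0 : Filter.Tendsto (fun k => g k - f) Filter.atTop (nhds 0) := by
      have h1 := hlim.sub_const f
      rwa [sub_self] at h1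
    have h2 := (continuous_norm.tendsto (0 : C(K,ℂ))).comp h0
    rwa [norm_zero] at h2
  -- pointwise convergence of the iterates of f
  have hcauchy : ∀ x : K, ∃ L : ℂ, Filter.Tendsto (fun n => (psiFun U Φ)^[n] ⇑f x)
      Filter.atTop (nhds L) := by
    intro x
    apply cauchySeq_tendsto_of_complete
    rw [Metric.cauchySeq_iff]
    intro ε hε
    have hε3 : 0 < ε/3 := by linarith
    obtain ⟨k, hk⟩ := (Metric.tendsto_atTop.1 hnorm) (ε/3) hε3
    have hk' : ‖g k - f‖ < ε/3 := by
      have := hk k (le_refl k); rwa [Real.dist_eq, sub_zero, abs_of_nonneg (norm_nonneg _)] at this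
    have hpk := (hp k).tendsto_at x
    obtain ⟨N, hN⟩ := (Metric.tendsto_atTop.1 hpk) (ε/9) (by linarith)
    refine ⟨N, fun m hm n hn => ?_⟩
    have h1 := hN m hm
    have h2 := hN n hn
    have h3 := hdist k m x
    have h4 := hdist k n x
    simp only [Complex.dist_eq] at h1 h2 ⊢
    have e1 : (psiFun U Φ)^[m] ⇑f x - (psiFun U Φ)^[n] ⇑f x
        = -((psiFun U Φ)^[m] ⇑(g k) x - (psiFun U Φ)^[m] ⇑f x)
          + ((psiFun U Φ)^[m] ⇑(g k) x - p k x)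
          + -((psiFun U Φ)^[n] ⇑(g k) x - p k x)
          + ((psiFun U Φ)^[n] ⇑(g k) x - (psiFun U Φ)^[n] ⇑f x) := by ring
    calc ‖(psiFun U Φ)^[m] ⇑f x - (psiFun U Φ)^[n] ⇑f x‖
        ≤ ‖(psiFun U Φ)^[m] ⇑(g k) x - (psiFun U Φ)^[m] ⇑f x‖
          + ‖(psiFun U Φ)^[m] ⇑(g k) x - p k x‖
          + ‖(psiFun U Φ)^[n] ⇑(g k) x - p k x‖
          + ‖(psiFun U Φ)^[n] ⇑(g k) x - (psiFun U Φ)^[n] ⇑f x‖ := by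
          rw [e1]
          refine le_trans (norm_add_le _ _) ?_
          refine add_le_add (le_trans (norm_add_le _ _) ?_) (le_refl _)
          refine add_le_add (le_trans (norm_add_le _ _) ?_)
            (le_of_eq (norm_neg _))
          exact add_le_add (le_of_eq (norm_neg _)) (le_refl _)
      _ < ε := by
          have c3 : ‖(psiFun U Φ)^[m] ⇑(g k) x - (psiFun U Φ)^[m] ⇑f x‖ < ε/3 :=
            lt_of_le_of_lt h3 hk'
          have c4 : ‖(psiFun U Φ)^[n] ⇑(g k) x - (psiFun U Φ)^[n] ⇑f x‖ < ε/3 :=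
            lt_of_le_of_lt h4 hk'
          linarith
  choose pf hpf using hcauchy
  refine ⟨pf, ?_⟩
  rw [Metric.tendstoUniformly_iff]
  intro ε hε
  have hε4 : 0 < ε/4 := by linarith
  obtain ⟨k, hk⟩ := (Metric.tendsto_atTop.1 hnorm) (ε/4) hε4
  have hk' : ‖g k - f‖ < ε/4 := by
    have := hk k (le_refl k); rwa [Real.dist_eq, sub_zero, abs_of_nonneg (norm_nonneg _)] at this
  -- dist (p k x) (pf x) ≤ ‖g k - f‖
  have hpkpf : ∀ x, dist (p k x) (pf x) ≤ ‖g k - f‖ := by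
    intro x
    have h1 : Filter.Tendsto
        (fun n => dist ((psiFun U Φ)^[n] ⇑(g k) x) ((psiFun U Φ)^[n] ⇑f x))
        Filter.atTop (nhds (dist (p k x) (pf x))) :=
      Filter.Tendsto.dist ((hp k).tendsto_at x) (hpf x)
    exact le_of_tendsto h1 (Filter.Eventually.of_forall fun n => by
      rw [Complex.dist_eq]; exact hdist k n x)
  filter_upwards [Metric.tendstoUniformly_iff.1 (hp k) (ε/4) hε4] with n hn x
  have t1 : dist ((psiFun U Φ)^[n] ⇑f x) ((psiFun U Φ)^[n] ⇑(g k) x) ≤ ε/4 := by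
    rw [Complex.dist_eq, norm_sub_rev]
    exact le_trans (hdist k n x) (le_of_lt hk')
  have t2 : dist ((psiFun U Φ)^[n] ⇑(g k) x) (p k x) < ε/4 := by
    rw [dist_comm]; exact hn x
  have t3 : dist (p k x) (pf x) < ε/2 := lt_of_le_of_lt (hpkpf x) (by linarith)
  calc dist (pf x) ((psiFun U Φ)^[n] ⇑f x)
      ≤ dist (pf x) (p k x) + dist (p k x) ((psiFun U Φ)^[n] ⇑(g k) x)
          + dist ((psiFun U Φ)^[n] ⇑(g k) x) ((psiFun U Φ)^[n] ⇑f x) := dist_triangle4 _ _ _ _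
    _ < ε := by
        rw [dist_comm (pf x) (p k x)]
        rw [dist_comm (p k x) ((psiFun U Φ)^[n] ⇑(g k) x)]
        rw [dist_comm ((psiFun U Φ)^[n] ⇑(g k) x) ((psiFun U Φ)^[n] ⇑f x)]
        linarith

end Assemble

section Main

set_option linter.unusedSectionVars false
set_option maxHeartbeats 1000000

variable {K : Type*} [MetricSpace K] [CompactSpace K] [MeasurableSpace K] [BorelSpace K]
  {U : Set K} {Φ : (↥U → ℂ) → (↥U → ℂ)}

/-- nonnegative real fixed points of `Ψ` -/
def Spos (U : Set K) (Φ : (↥U → ℂ) → (↥U → ℂ)) : Set C(K,ℂ) :=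
  {w : C(K,ℂ) | (∀ x, (w x).im = 0) ∧ (∀ x, 0 ≤ (w x).re) ∧ psiFun U Φ ⇑w = ⇑w}

/-- powers of elements of `Spos` -/
def Tpow (U : Set K) (Φ : (↥U → ℂ) → (↥U → ℂ)) : Set C(K,ℂ) :=
  {u : C(K,ℂ) | ∃ w ∈ Spos U Φ, ∃ k : ℕ, u = w ^ k}

lemma Spos_zero (hM : IsMarkovOperator Φ) : (0 : C(K,ℂ)) ∈ Spos U Φ := by
  refine ⟨fun x => by simp, fun x => by simp, ?_⟩
  rw [show ⇑(0 : C(K,ℂ)) = fun _ : K => (0:ℂ) from rfl]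
  exact psi_const hM 0

lemma Spos_add (hM : IsMarkovOperator Φ) {w v : C(K,ℂ)}
    (hw : w ∈ Spos U Φ) (hv : v ∈ Spos U Φ) : w + v ∈ Spos U Φ := by
  obtain ⟨hw1, hw2, hw3⟩ := hw; obtain ⟨hv1, hv2, hv3⟩ := hv
  refine ⟨fun x => by simp [hw1 x, hv1 x], fun x => by
    simp only [ContinuousMap.add_apply, Complex.add_re]
    exact add_nonneg (hw2 x) (hv2 x), ?_⟩
  have : ⇑(w + v) = fun x => ⇑w x + ⇑v x := rfl
  rw [this, psi_add hM (MB.of_continuous w.continuous) (MB.of_continuous v.continuous),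
    hw3, hv3]

lemma good_of_spanT (hM : IsMarkovOperator Φ) (hSF : HasStrongFeller Φ) (hUo : IsOpen U)
    (hA : CondA U Φ) {g : C(K,ℂ)} (hg : g ∈ Submodule.span ℂ (Tpow U Φ)) :
    GoodF U Φ g := by
  induction hg using Submodule.span_induction with
  | mem u hu =>
    obtain ⟨w, ⟨hw1, hw2, hw3⟩, k, rfl⟩ := hu
    exact good_pow hM hSF hUo hA w hw1 hw2 hw3 k
  | zero => exact good_zero hM
  | add x y hx hy hgx hgy => exact good_add hM hSF hUo hgx hgy
  | smul c x hx hgx => exact good_smul hM hSF hUo c hgx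

lemma prod_mem_spanT (hM : IsMarkovOperator Φ) (m : Multiset C(K,ℂ))
    (hm : ∀ w ∈ m, w ∈ Spos U Φ) : m.prod ∈ Submodule.span ℂ (Tpow U Φ) := by
  classical
  set l : List C(K,ℂ) := m.toList with hl
  have hml : ∀ w ∈ l, w ∈ Spos U Φ := by
    intro w hw
    apply hm
    rw [← Multiset.mem_toList]
    exact hw
  set n : ℕ := l.length with hn
  set x : Fin n → C(K,ℂ) := fun i => l.get i with hx
  have hprod : ∏ i : Fin n, x i = m.prod := by
    rw [hx]
    simp only [List.get_eq_getElem]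
    rw [Fin.prod_univ_getElem l]
    rw [hl, Multiset.prod_toList]
  have hpolar := polar_identity x Finset.univ n (by simp [hn])
  rw [Finset.card_univ, Fintype.card_fin] at hpolar
  rw [if_pos rfl, hprod] at hpolar
  -- each summand is in the span
  have hsummand : ∀ T ∈ (Finset.univ : Finset (Fin n)).powerset,
      (-1 : C(K,ℂ))^(n - T.card) * (∑ i ∈ T, x i)^n
        ∈ Submodule.span ℂ (Tpow U Φ) := by
    intro T hT
    have hsum : (∑ i ∈ T, x i) ∈ Spos U Φ := by
      apply Finset.sum_induction x (· ∈ Spos U Φ)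
        (fun a b ha hb => Spos_add hM ha hb) (Spos_zero hM)
      intro i _
      refine hml (l.get i) ?_
      rw [List.get_eq_getElem]
      exact List.getElem_mem i.isLt
    have hpow : (∑ i ∈ T, x i)^n ∈ Tpow U Φ := ⟨_, hsum, n, rfl⟩
    have hmem : (∑ i ∈ T, x i)^n ∈ Submodule.span ℂ (Tpow U Φ) :=
      Submodule.subset_span hpow
    rcases Nat.even_or_odd (n - T.card) with he | ho
    · rw [he.neg_one_pow, one_mul]; exact hmem
    · rw [ho.neg_one_pow, neg_one_mul]; exact Submodule.neg_mem _ hmem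
  have hsum_mem : ((n.factorial : ℕ) : C(K,ℂ)) * m.prod ∈ Submodule.span ℂ (Tpow U Φ) := by
    rw [← hpolar]
    exact Submodule.sum_mem _ hsummand
  have hcast : ((n.factorial : ℕ) : C(K,ℂ)) * m.prod
      = ((n.factorial : ℕ) : ℂ) • m.prod := by
    rw [Algebra.smul_def, map_natCast]
  rw [hcast] at hsum_mem
  have hne : ((n.factorial : ℕ) : ℂ) ≠ 0 := by
    exact_mod_cast Nat.factorial_ne_zero n
  have := Submodule.smul_mem (Submodule.span ℂ (Tpow U Φ)) (((n.factorial : ℕ) : ℂ))⁻¹ hsum_mem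
  rwa [inv_smul_smul₀ hne] at this

lemma good_of_adjoin (hM : IsMarkovOperator Φ) (hSF : HasStrongFeller Φ) (hUo : IsOpen U)
    (hA : CondA U Φ) {g : C(K,ℂ)} (hg : g ∈ Algebra.adjoin ℂ (Spos U Φ)) :
    GoodF U Φ g := by
  have hg' : g ∈ Submodule.span ℂ ((Submonoid.closure (Spos U Φ) : Submonoid C(K,ℂ)) : Set C(K,ℂ)) := by
    rw [← Algebra.adjoin_eq_span]
    exact (Subalgebra.mem_toSubmodule _).2 hg
  clear hg
  induction hg' using Submodule.span_induction with
  | mem u hu =>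
    obtain ⟨m, hm, rfl⟩ := Submonoid.exists_multiset_of_mem_closure hu
    exact good_of_spanT hM hSF hUo hA (prod_mem_spanT hM m hm)
  | zero => exact good_zero hM
  | add x y hx hy hgx hgy => exact good_add hM hSF hUo hgx hgy
  | smul c x hx hgx => exact good_smul hM hSF hUo c hgx

/-- every fixed point of `Ψ` lies in the algebra generated by `Spos`. -/
lemma fix_sub_adjoin (hM : IsMarkovOperator Φ) {h : C(K,ℂ)}
    (hfix : psiFun U Φ ⇑h = ⇑h) : h ∈ Algebra.adjoin ℂ (Spos U Φ) := by
  have hMBh : MB ⇑h := MB.of_continuous h.continuous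
  -- conj h is fixed
  have hconjfix : psiFun U Φ (fun x => (starRingEnd ℂ) (h x)) = fun x => (starRingEnd ℂ) (h x) := by
    rw [psi_conj hM hMBh]
    funext x
    rw [congrFun hfix x]
  -- real and imaginary parts as continuous maps
  set hre : C(K,ℂ) := ⟨fun x => ((h x).re : ℂ),
    Complex.continuous_ofReal.comp (Complex.continuous_re.comp h.continuous)⟩ with hhre
  set him : C(K,ℂ) := ⟨fun x => ((h x).im : ℂ),
    Complex.continuous_ofReal.comp (Complex.continuous_im.comp h.continuous)⟩ with hhim
  have hreim : ∀ x, (hre x).im = 0 := fun x => by simp [hhre]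
  have himim : ∀ x, (him x).im = 0 := fun x => by simp [hhim]
  have hMBconj : MB (fun x => (starRingEnd ℂ) (h x)) := by
    obtain ⟨C, hC⟩ := hMBh.2
    exact ⟨(Complex.continuous_conj.measurable).comp hMBh.1, C, fun y => by
      rw [RCLike.norm_conj]; exact hC y⟩
  -- hre is fixed
  have hrefix : psiFun U Φ ⇑hre = ⇑hre := by
    have e0 : ⇑hre = fun x => (2⁻¹ : ℂ) * (⇑h x + (starRingEnd ℂ) (h x)) := by
      funext x
      rw [hhre]
      simp only [ContinuousMap.coe_mk]
      rw [Complex.add_conj]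
      push_cast
      ring
    rw [e0]
    have hsMB : MB (fun x => ⇑h x + (starRingEnd ℂ) (h x)) := by
      obtain ⟨C1, hC1⟩ := hMBh.2; obtain ⟨C2, hC2⟩ := hMBconj.2
      exact ⟨hMBh.1.add hMBconj.1, C1 + C2, fun y =>
        (norm_add_le _ _).trans (add_le_add (hC1 y) (hC2 y))⟩
    rw [psi_smul hM hsMB, psi_add hM hMBh hMBconj, hconjfix]
    funext x
    simp [hfix]
  -- him is fixed
  have himfix : psiFun U Φ ⇑him = ⇑him := by
    have e0 : ⇑him = fun x =>
        ((-Complex.I) * 2⁻¹) * (⇑h x + (-1 : ℂ) * (starRingEnd ℂ) (h x)) := by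
      funext x
      rw [hhim]
      simp only [ContinuousMap.coe_mk]
      have : ⇑h x + (-1:ℂ) * (starRingEnd ℂ) (h x) = h x - (starRingEnd ℂ) (h x) := by ring
      rw [this, Complex.sub_conj]
      push_cast
      have hI : Complex.I * Complex.I = -1 := Complex.I_mul_I
      field_simp
      ring_nf
      rw [show Complex.I ^ 2 = Complex.I * Complex.I from sq Complex.I, hI]
      ring
    rw [e0]
    have hnc : MB (fun x => (-1 : ℂ) * (starRingEnd ℂ) (h x)) := by
      obtain ⟨C2, hC2⟩ := hMBconj.2
      exact ⟨hMBconj.1.const_mul _, C2, fun y => by simpa using hC2 y⟩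
    have hsMB : MB (fun x => ⇑h x + (-1 : ℂ) * (starRingEnd ℂ) (h x)) := by
      obtain ⟨C1, hC1⟩ := hMBh.2; obtain ⟨C2, hC2⟩ := hnc.2
      exact ⟨hMBh.1.add hnc.1, C1 + C2, fun y =>
        (norm_add_le _ _).trans (add_le_add (hC1 y) (hC2 y))⟩
    rw [psi_smul hM hsMB, psi_add hM hMBh hnc, psi_smul hM hMBconj, hconjfix]
    funext x
    simp [hfix]
  -- shifted versions are in Spos
  have shift : ∀ (r : C(K,ℂ)), (∀ x, (r x).im = 0) → psiFun U Φ ⇑r = ⇑r →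
      r + (‖r‖ : ℂ) • (1 : C(K,ℂ)) ∈ Spos U Φ := by
    intro r hrim hrfix
    have happ : ∀ x, (r + (‖r‖ : ℂ) • (1 : C(K,ℂ))) x = r x + (‖r‖ : ℂ) := by
      intro x
      simp [ContinuousMap.add_apply, ContinuousMap.smul_apply, smul_eq_mul]
    refine ⟨fun x => by rw [happ x]; simp [hrim x], fun x => ?_, ?_⟩
    · rw [happ x]
      simp only [Complex.add_re, Complex.ofReal_re]
      have h1 : |(r x).re| ≤ ‖r‖ := by
        calc |(r x).re| ≤ ‖r x‖ := Complex.abs_re_le_norm _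
          _ ≤ ‖r‖ := by exact r.norm_coe_le_norm x
      have := neg_abs_le ((r x).re)
      linarith
    · have e0 : ⇑(r + (‖r‖ : ℂ) • (1 : C(K,ℂ))) = fun x => (‖r‖ : ℂ) + (1:ℂ) * ⇑r x := by
        funext x
        rw [happ x]
        ring
      rw [e0]
      have := psi_add hM (⟨measurable_const, ‖(‖r‖:ℂ)‖, fun _ => le_refl _⟩ : MB (fun _ : K => (‖r‖:ℂ)))
        (by
          obtain ⟨C, hC⟩ := (MB.of_continuous r.continuous).2
          exact ⟨(MB.of_continuous r.continuous).1.const_mul _, ‖(1:ℂ)‖ * C, fun y => by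
            rw [norm_mul]; exact mul_le_mul_of_nonneg_left (hC y) (norm_nonneg _)⟩)
      rw [show (fun x : K => (‖r‖:ℂ) + (1:ℂ) * ⇑r x)
          = fun x => (fun _ : K => (‖r‖:ℂ)) x + (fun x => (1:ℂ) * ⇑r x) x from rfl, this,
        psi_const hM, psi_smul hM (MB.of_continuous r.continuous), hrfix]
  have hwre := shift hre hreim hrefix
  have hwim := shift him himim himfix
  have hdecomp : h = ((hre + (‖hre‖:ℂ) • (1 : C(K,ℂ))) - (‖hre‖:ℂ) • (1 : C(K,ℂ)))
      + Complex.I • ((him + (‖him‖:ℂ) • (1 : C(K,ℂ))) - (‖him‖:ℂ) • (1 : C(K,ℂ))) := by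
    ext x
    simp only [ContinuousMap.add_apply, ContinuousMap.sub_apply, ContinuousMap.smul_apply,
      ContinuousMap.one_apply, smul_eq_mul, mul_one]
    rw [hhre, hhim]
    simp only [ContinuousMap.coe_mk]
    linear_combination -Complex.re_add_im (h x)
  rw [hdecomp]
  have h1mem : (1 : C(K,ℂ)) ∈ Algebra.adjoin ℂ (Spos U Φ) := Subalgebra.one_mem _
  exact Subalgebra.add_mem _
    (Subalgebra.sub_mem _ (Algebra.subset_adjoin hwre)
      (Subalgebra.smul_mem _ h1mem _))
    (Subalgebra.smul_mem _
      (Subalgebra.sub_mem _ (Algebra.subset_adjoin hwim)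
        (Subalgebra.smul_mem _ h1mem _)) _)

end Main


/-- If `A` is the norm-closed subalgebra of `C(K)` generated by
`Fix(Ψ) = {h : Ψ h = h}`, then `{Ψⁿ f}` converges uniformly on `K` for
every `f ∈ A`. -/
theorem stmt10 {K : Type*} [MetricSpace K] [CompactSpace K]
    [MeasurableSpace K] [BorelSpace K]
    (U : Set K) (hUopen : IsOpen U) (hUdense : Dense U)
    (hbd : ∃ a b : K, a ∈ Uᶜ ∧ b ∈ Uᶜ ∧ a ≠ b)
    (Φ : (↥U → ℂ) → (↥U → ℂ))
    (hM : IsMarkovOperator Φ) (hSF : HasStrongFeller Φ)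
    (hA : CondA U Φ)
    (f : C(K, ℂ))
    (hf : f ∈ (Algebra.adjoin ℂ
      {h : C(K, ℂ) | psiFun U Φ ⇑h = ⇑h}).topologicalClosure) :
    ∃ p : K → ℂ,
      TendstoUniformly (fun n x => (psiFun U Φ)^[n] ⇑f x) p atTop := by
  have hSsub : {h : C(K,ℂ) | psiFun U Φ ⇑h = ⇑h}
      ⊆ ↑(Algebra.adjoin ℂ (Spos U Φ)) :=
    fun h hh => fix_sub_adjoin hM hh
  have hadj : Algebra.adjoin ℂ {h : C(K,ℂ) | psiFun U Φ ⇑h = ⇑h}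
      ≤ Algebra.adjoin ℂ (Spos U Φ) := Algebra.adjoin_le hSsub
  have hf1 : f ∈ closure ((Algebra.adjoin ℂ
      {h : C(K,ℂ) | psiFun U Φ ⇑h = ⇑h} : Subalgebra ℂ C(K,ℂ)) : Set C(K,ℂ)) := hf
  have hf2 : f ∈ closure ((Algebra.adjoin ℂ (Spos U Φ) : Subalgebra ℂ C(K,ℂ)) :
      Set C(K,ℂ)) :=
    closure_mono (SetLike.coe_subset_coe.2 hadj) hf1
  obtain ⟨g, hgmem, hgl⟩ := mem_closure_iff_seq_limit.1 hf2
  exact good_closed hM hSF hUopen g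
    (fun k => good_of_adjoin hM hSF hUopen hA (hgmem k)) hgl
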